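/- An edge e with distinct endpoints u, v belongs to the minimum spanning tree of a connected graph G with distinct edge weights if and only if u and v lie in different connected components of the subgraph consisting of all edges strictly lighter than e. -/

import Mathlib

noncomputable section
open Classical

variable {V : Type*}

/-- The total weight of the edge set of a graph (with respect to weights `w`). -/
def graphWeight [Finite V] (w : Sym2 V → ℝ) (T : SimpleGraph V) : ℝ :=
  ∑ e ∈ T.edgeSet.toFinite.toFinset, w e

/-- `T` is a minimum spanning tree of `G` with respect to the weights `w`. -/
def IsMST [Finite V] (G : SimpleGraph V) (w : Sym2 V → ℝ) (T : SimpleGraph V) : Prop :=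
  T ≤ G ∧ T.IsTree ∧
    ∀ T' : SimpleGraph V, T' ≤ G → T'.IsTree → graphWeight w T ≤ graphWeight w T'

namespace MSTAux

open SimpleGraph

lemma reach_or_aux {K : SimpleGraph V} {a b z c : V} (p : K.Walk z c) :
    (K \ SimpleGraph.fromEdgeSet {s(a, b)}).Reachable z c ∨
    (K \ SimpleGraph.fromEdgeSet {s(a, b)}).Reachable z a ∨
    (K \ SimpleGraph.fromEdgeSet {s(a, b)}).Reachable z b := by
  induction p with
  | nil => exact Or.inl (SimpleGraph.Reachable.refl _)
  | @cons x y _ h _ ih =>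
    by_cases hxy : s(x, y) = s(a, b)
    · rw [Sym2.eq_iff] at hxy
      rcases hxy with ⟨rfl, rfl⟩ | ⟨rfl, rfl⟩
      · exact Or.inr (Or.inl (SimpleGraph.Reachable.refl _))
      · exact Or.inr (Or.inr (SimpleGraph.Reachable.refl _))
    · have hadj : (K \ SimpleGraph.fromEdgeSet {s(a, b)}).Adj x y := by
        simp only [SimpleGraph.sdiff_adj, SimpleGraph.fromEdgeSet_adj, Set.mem_singleton_iff]
        exact ⟨h, fun hc => hxy hc.1⟩
      rcases ih with h' | h' | h'
      · exact Or.inl (hadj.reachable.trans h')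
      · exact Or.inr (Or.inl (hadj.reachable.trans h'))
      · exact Or.inr (Or.inr (hadj.reachable.trans h'))

/-- After deleting the edge `s(a,b)`, from any vertex with a walk to `a`
we can still reach `a` or `b`. -/
lemma reach_or {K : SimpleGraph V} {a b z : V} (p : K.Walk z a) :
    (K \ SimpleGraph.fromEdgeSet {s(a, b)}).Reachable z a ∨
    (K \ SimpleGraph.fromEdgeSet {s(a, b)}).Reachable z b := by
  rcases reach_or_aux (a := a) (b := b) p with h | h | h
  · exact Or.inl h
  · exact Or.inl h
  · exact Or.inr h

/-- A walk from a vertex satisfying `P` to one not satisfying `P` crosses the boundary. -/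
lemma exists_crossing {K : SimpleGraph V} (P : V → Prop) :
    ∀ {a b : V} (p : K.Walk a b), P a → ¬P b →
      ∃ x y, s(x, y) ∈ p.edges ∧ P x ∧ ¬P y := by
  intro a b p
  induction p with
  | nil => intro h h'; exact absurd h h'
  | @cons x y _ h p ih =>
    intro hx hb
    by_cases hy : P y
    · obtain ⟨x', y', hmem, h1, h2⟩ := ih hy hb
      exact ⟨x', y', List.mem_cons_of_mem _ hmem, h1, h2⟩
    · exact ⟨x, y, List.mem_cons_self, hx, hy⟩

lemma connected_of_pivots {K : SimpleGraph V} {x y : V} (hxy : K.Reachable x y)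
    (h : ∀ z, K.Reachable z x ∨ K.Reachable z y) : K.Connected := by
  have hx : ∀ z, K.Reachable z x := fun z => (h z).elim id fun h' => h'.trans hxy.symm
  haveI : Nonempty V := ⟨x⟩
  exact ⟨fun z w => (hx z).trans (hx w).symm⟩

lemma fromEdgeSet_singleton_le {g : Sym2 V} {G : SimpleGraph V} (h : g ∈ G.edgeSet) :
    SimpleGraph.fromEdgeSet {g} ≤ G := by
  intro a b hab
  rw [SimpleGraph.fromEdgeSet_adj] at hab
  rcases hab with ⟨h1, _⟩
  rw [Set.mem_singleton_iff] at h1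
  exact (SimpleGraph.mem_edgeSet _).mp (by rw [h1]; exact h)

lemma singleton_diff_diag {e : Sym2 V} (h : ¬e.IsDiag) :
    ({e} : Set (Sym2 V)) \ Sym2.diagSet = {e} := by
  ext g
  simp only [Set.mem_diff, Set.mem_singleton_iff, Sym2.mem_diagSet]
  exact ⟨And.left, fun hg => ⟨hg, hg ▸ h⟩⟩

/-- Every finite connected graph contains a spanning tree. -/
lemma exists_tree_le [Finite V] {K : SimpleGraph V} (hK : K.Connected) :
    ∃ T, T ≤ K ∧ T.IsTree := by
  classical
  suffices H : ∀ n (K : SimpleGraph V), K.Connected → K.edgeSet.ncard = n →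
      ∃ T, T ≤ K ∧ T.IsTree from H _ K hK rfl
  intro n
  induction n using Nat.strong_induction_on with
  | _ n ih =>
    intro K hK hn
    by_cases hac : K.IsAcyclic
    · exact ⟨K, le_rfl, hK, hac⟩
    · rw [SimpleGraph.IsAcyclic] at hac
      push_neg at hac
      obtain ⟨v, c, hc⟩ := hac
      have hlen : c.edges ≠ [] := by
        have h3 := hc.three_le_length
        intro h
        rw [← SimpleGraph.Walk.length_edges, h] at h3
        simp at h3
      obtain ⟨x, y, he⟩ : ∃ x y, s(x, y) ∈ c.edges := by
        obtain ⟨e, he⟩ := List.exists_mem_of_ne_nil _ hlen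
        exact Sym2.exists.mp ⟨e, he⟩
      have hadj : K.Adj x y := c.adj_of_mem_edges he
      have hreach : (K \ SimpleGraph.fromEdgeSet {s(x, y)}).Reachable x y :=
        (SimpleGraph.adj_and_reachable_delete_edges_iff_exists_cycle.mpr ⟨v, c, hc, he⟩).2
      have hK'conn : (K \ SimpleGraph.fromEdgeSet {s(x, y)}).Connected := by
        apply connected_of_pivots hreach
        intro z
        exact reach_or ((hK z x).some)
      have hsub : (K \ SimpleGraph.fromEdgeSet {s(x, y)}).edgeSet = K.edgeSet \ {s(x, y)} := by
        rw [SimpleGraph.edgeSet_sdiff, SimpleGraph.edgeSet_fromEdgeSet,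
          singleton_diff_diag (e := s(x, y)) (by simpa using hadj.ne)]
      have hcard : (K \ SimpleGraph.fromEdgeSet {s(x, y)}).edgeSet.ncard < n := by
        rw [hsub, ← hn]
        exact Set.ncard_diff_singleton_lt_of_mem hadj (K.edgeSet.toFinite)
      obtain ⟨T, hle, hT⟩ := ih _ hcard _ hK'conn rfl
      exact ⟨T, hle.trans sdiff_le, hT⟩

lemma tree_ncard [Finite V] {T : SimpleGraph V} (h : T.IsTree) :
    T.edgeSet.ncard + 1 = Nat.card V := by
  classical
  have : Fintype V := Fintype.ofFinite V
  rw [Nat.card_eq_fintype_card, ← h.card_edgeFinset]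
  congr 1
  rw [Set.ncard_eq_toFinset_card' T.edgeSet]
  exact congrArg Finset.card (by ext; simp)

lemma isTree_of_connected_of_ncard_le [Finite V] {K : SimpleGraph V} (hK : K.Connected)
    (h : K.edgeSet.ncard + 1 ≤ Nat.card V) : K.IsTree := by
  obtain ⟨T, hle, hT⟩ := exists_tree_le hK
  have h1 := tree_ncard hT
  have hsub : T.edgeSet ⊆ K.edgeSet := SimpleGraph.edgeSet_mono hle
  have heq : T.edgeSet = K.edgeSet :=
    Set.eq_of_subset_of_ncard_le hsub (by omega) (K.edgeSet.toFinite)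
  rwa [← SimpleGraph.edgeSet_inj.mp heq]

lemma graphWeight_exchange [Finite V] (w : Sym2 V → ℝ) {T T' : SimpleGraph V} {e f : Sym2 V}
    (he : e ∈ T.edgeSet) (hf : f ∉ T.edgeSet)
    (hset : T'.edgeSet = insert f (T.edgeSet \ {e})) :
    graphWeight w T' = graphWeight w T - w e + w f := by
  classical
  have key : T'.edgeSet.toFinite.toFinset
      = insert f (T.edgeSet.toFinite.toFinset.erase e) := by
    ext g
    simp only [Set.Finite.mem_toFinset, hset, Set.mem_insert_iff, Set.mem_diff,
      Set.mem_singleton_iff, Finset.mem_insert, Finset.mem_erase]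
    tauto
  rw [graphWeight, key, Finset.sum_insert, Finset.sum_erase_eq_sub]
  · rw [graphWeight]; ring
  · exact (Set.Finite.mem_toFinset _).mpr he
  · simp only [Finset.mem_erase, Set.Finite.mem_toFinset]
    exact fun h => hf h.2

lemma ncard_exchange {e f : Sym2 V} {s : Set (Sym2 V)} (hfin : s.Finite) (he : e ∈ s) :
    (insert f (s \ {e})).ncard ≤ s.ncard := by
  have h1 := Set.ncard_insert_le f (s \ {e})
  have h2 : (s \ {e}).ncard = s.ncard - 1 := Set.ncard_diff_singleton_of_mem he
  have h3 : 0 < s.ncard := (Set.ncard_pos hfin).mpr ⟨e, he⟩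
  omega

end MSTAux

open SimpleGraph MSTAux

/-- An edge `uv` of a connected graph `G` with distinct edge weights belongs to the
minimum spanning tree iff `u` and `v` lie in different connected components of the
subgraph of all edges strictly lighter than `uv`. -/
theorem stmt_8 [Finite V] (G : SimpleGraph V) (hG : G.Connected)
    (w : Sym2 V → ℝ) (hw : Set.InjOn w G.edgeSet)
    (T : SimpleGraph V) (hT : IsMST G w T)
    (u v : V) (huv : G.Adj u v) :
    s(u, v) ∈ T.edgeSet ↔
      ¬ (SimpleGraph.fromEdgeSet {f | f ∈ G.edgeSet ∧ w f < w s(u, v)}).Reachable u v := by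
  classical
  obtain ⟨hTG, hTtree, hTmin⟩ := hT
  have hconnT : T.Connected := hTtree.1
  have hnd_e : ¬(s(u, v) : Sym2 V).IsDiag := by simpa using huv.ne
  constructor
  · -- e ∈ T → not reachable in the lighter subgraph
    intro heT hreach
    obtain ⟨q⟩ := hreach
    have hTadj : T.Adj u v := heT
    have hbridge : ¬(T \ SimpleGraph.fromEdgeSet {s(u, v)}).Reachable u v :=
      ((isAcyclic_iff_forall_adj_isBridge.mp hTtree.2) hTadj)
    obtain ⟨x, y, hmem, hPx, hPy⟩ := exists_crossing
      (fun z => (T \ SimpleGraph.fromEdgeSet {s(u, v)}).Reachable z u) q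
      (SimpleGraph.Reachable.refl _) (fun h => hbridge h.symm)
    have hHxy := q.adj_of_mem_edges hmem
    rw [SimpleGraph.fromEdgeSet_adj] at hHxy
    obtain ⟨⟨hxyG, hxyw⟩, hne⟩ := hHxy
    have hnd_f : ¬(s(x, y) : Sym2 V).IsDiag := by simpa using hne
    have hyv : (T \ SimpleGraph.fromEdgeSet {s(u, v)}).Reachable y v := by
      rcases reach_or (hconnT y u).some with h | h
      · exact absurd h hPy
      · exact h
    have hfT : s(x, y) ∉ T.edgeSet := by
      intro hmem'
      have hadj' : (T \ SimpleGraph.fromEdgeSet {s(u, v)}).Adj x y := by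
        simp only [SimpleGraph.sdiff_adj, SimpleGraph.fromEdgeSet_adj, Set.mem_singleton_iff]
        refine ⟨hmem', ?_⟩
        rintro ⟨h1, -⟩
        exact (ne_of_lt hxyw) (by rw [h1])
      exact hPy (hadj'.symm.reachable.trans hPx)
    set T' := (T \ SimpleGraph.fromEdgeSet {s(u, v)}) ⊔ SimpleGraph.fromEdgeSet {s(x, y)}
      with hT'def
    have hT'edge : T'.edgeSet = insert s(x, y) (T.edgeSet \ {s(u, v)}) := by
      rw [hT'def, SimpleGraph.edgeSet_sup, SimpleGraph.edgeSet_sdiff,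
        SimpleGraph.edgeSet_fromEdgeSet, SimpleGraph.edgeSet_fromEdgeSet,
        singleton_diff_diag hnd_e, singleton_diff_diag hnd_f, Set.union_singleton]
    have hT'conn : T'.Connected := by
      apply connected_of_pivots (x := u) (y := v)
      · have h1 : T'.Reachable u x := (hPx.mono le_sup_left).symm
        have h2 : T'.Reachable x y := by
          have : T'.Adj x y := by
            rw [hT'def, SimpleGraph.sup_adj]
            exact Or.inr ((SimpleGraph.fromEdgeSet_adj _).mpr ⟨rfl, hne⟩)
          exact this.reachable
        have h3 : T'.Reachable y v := hyv.mono le_sup_left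
        exact (h1.trans h2).trans h3
      · intro z
        rcases reach_or (hconnT z u).some with h | h
        · exact Or.inl (h.mono le_sup_left)
        · exact Or.inr (h.mono le_sup_left)
    have hT'le : T' ≤ G := sup_le (sdiff_le.trans hTG) (fromEdgeSet_singleton_le hxyG)
    have hT'tree : T'.IsTree := by
      apply isTree_of_connected_of_ncard_le hT'conn
      have hc1 := ncard_exchange (f := s(x, y)) (T.edgeSet.toFinite) heT
      have hc2 := tree_ncard hTtree
      rw [hT'edge]
      omega
    have hwgt := graphWeight_exchange w heT hfT hT'edge
    have hmin := hTmin T' hT'le hT'tree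
    linarith
  · -- not reachable → e ∈ T
    intro hnreach
    by_contra heT
    apply hnreach
    obtain ⟨p0⟩ := hconnT u v
    let p : T.Path u v := p0.toPath
    refine ⟨(p : T.Walk u v).transfer _ ?_⟩
    intro g hg
    have hgT : g ∈ T.edgeSet := (p : T.Walk u v).edges_subset_edgeSet hg
    have hgG : g ∈ G.edgeSet := SimpleGraph.edgeSet_mono hTG hgT
    have hgne : g ≠ s(u, v) := fun h => heT (h ▸ hgT)
    have hwlt : w g < w s(u, v) := by
      rcases lt_or_gt_of_ne (fun h => hgne (hw hgG huv h)) with h | h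
      · exact h
      · exfalso
        obtain ⟨x, y, rfl⟩ : ∃ x y, g = s(x, y) := by
          induction g using Sym2.ind with
          | _ a b => exact ⟨a, b, rfl⟩
        have hadj_xy : T.Adj x y := hgT
        have hnd_f : ¬(s(x, y) : Sym2 V).IsDiag := by simpa using hadj_xy.ne
        set K := T ⊔ SimpleGraph.fromEdgeSet {s(u, v)} with hKdef
        have hKadj : K.Adj v u := by
          rw [hKdef, SimpleGraph.sup_adj]
          exact Or.inr ((SimpleGraph.fromEdgeSet_adj _).mpr
            ⟨by rw [Set.mem_singleton_iff, Sym2.eq_swap], huv.ne'⟩)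
        let p2 : K.Walk u v := (p : T.Walk u v).transfer K
          (fun g' hg' => SimpleGraph.edgeSet_mono le_sup_left
            ((p : T.Walk u v).edges_subset_edgeSet hg'))
        have hp2 : p2.IsPath := SimpleGraph.Walk.IsPath.transfer _ p.2
        have he_not : s(v, u) ∉ p2.edges := by
          rw [SimpleGraph.Walk.edges_transfer]
          intro hmem
          exact heT (Sym2.eq_swap ▸ (p : T.Walk u v).edges_subset_edgeSet hmem)
        have hcyc : (SimpleGraph.Walk.cons hKadj p2).IsCycle :=
          SimpleGraph.Path.cons_isCycle ⟨p2, hp2⟩ hKadj he_not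
        have hmemc : s(x, y) ∈ (SimpleGraph.Walk.cons hKadj p2).edges := by
          rw [SimpleGraph.Walk.edges_cons]
          exact List.mem_cons_of_mem _ (by rw [SimpleGraph.Walk.edges_transfer]; exact hg)
        have hreach_xy : (K \ SimpleGraph.fromEdgeSet {s(x, y)}).Reachable x y :=
          (SimpleGraph.adj_and_reachable_delete_edges_iff_exists_cycle.mpr
            ⟨v, _, hcyc, hmemc⟩).2
        set T' := K \ SimpleGraph.fromEdgeSet {s(x, y)} with hT'def
        have hKconn : K.Connected := hconnT.mono le_sup_left
        have hT'conn : T'.Connected :=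
          connected_of_pivots hreach_xy (fun z => reach_or ((hKconn z x).some))
        have hT'edge : T'.edgeSet = insert s(u, v) (T.edgeSet \ {s(x, y)}) := by
          rw [hT'def, SimpleGraph.edgeSet_sdiff, hKdef, SimpleGraph.edgeSet_sup,
            SimpleGraph.edgeSet_fromEdgeSet, SimpleGraph.edgeSet_fromEdgeSet,
            singleton_diff_diag hnd_e, singleton_diff_diag hnd_f, Set.union_singleton,
            Set.insert_sdiff_of_notMem]
          rw [Set.mem_singleton_iff]
          exact fun hh => hgne hh.symm
        have hT'le : T' ≤ G :=
          sdiff_le.trans (sup_le hTG (fromEdgeSet_singleton_le huv))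
        have hT'tree : T'.IsTree := by
          apply isTree_of_connected_of_ncard_le hT'conn
          have hc1 := ncard_exchange (f := s(u, v)) (T.edgeSet.toFinite) hgT
          have hc2 := tree_ncard hTtree
          rw [hT'edge]
          omega
        have hwgt := graphWeight_exchange w hgT heT hT'edge
        have hmin := hTmin T' hT'le hT'tree
        linarith
    rw [SimpleGraph.edgeSet_fromEdgeSet]
    exact ⟨⟨hgG, hwlt⟩, T.not_isDiag_of_mem_edgeSet hgT⟩
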